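/- arXiv:2205.03965 — 3 statements merged into one kernel-verified Lean document; each statement's English description precedes it below -/
import Mathlib

section
/- For all positive integers n, the connected size Ramsey number of the matching nK₂ versus the 4-cycle C₄ is at most ⌊(9n−1)/2⌋; that is, there exists a connected graph G with at most ⌊(9n−1)/2⌋ edges such that G → (nK₂, C₄). -/
open SimpleGraph

/-- `G` contains a copy of `H`, i.e. there is an injective graph homomorphism from `H` to `G`. -/
def ContainsCopy {V W : Type*} (G : SimpleGraph V) (H : SimpleGraph W) : Prop :=
  ∃ f : H →g G, Function.Injective f

/-- `G` arrows `(G₁, G₂)`: for every red/blue colouring of the edges of `G`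
(given by a subgraph `R ≤ G` of red edges, the blue edges being `G \ R`),
there is a red copy of `G₁` or a blue copy of `G₂`. -/
def Arrows {V V₁ V₂ : Type*} (G : SimpleGraph V) (G₁ : SimpleGraph V₁) (G₂ : SimpleGraph V₂) :
    Prop :=
  ∀ R : SimpleGraph V, R ≤ G → ContainsCopy R G₁ ∨ ContainsCopy (G \ R) G₂

/-- The matching `nK₂` with `n` edges. -/
def Matching (n : ℕ) : SimpleGraph (Fin n × Fin 2) where
  Adj a b := a.1 = b.1 ∧ a.2 ≠ b.2
  symm := ⟨by intro a b h; exact ⟨h.1.symm, h.2.symm⟩⟩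
  loopless := ⟨by intro a h; exact h.2 rfl⟩

/-- `n` disjoint copies of the graph `H`. -/
def Copies (n : ℕ) {W : Type*} (H : SimpleGraph W) : SimpleGraph (Fin n × W) where
  Adj a b := a.1 = b.1 ∧ H.Adj a.2 b.2
  symm := ⟨by intro a b h; exact ⟨h.1.symm, h.2.symm⟩⟩
  loopless := ⟨by intro a h; exact H.loopless.irrefl _ h.2⟩

/-- Disjoint union of two graphs. -/
def DisjUnion {V W : Type*} (G : SimpleGraph V) (H : SimpleGraph W) : SimpleGraph (V ⊕ W) where
  Adj a b :=
    match a, b with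
    | Sum.inl x, Sum.inl y => G.Adj x y
    | Sum.inr x, Sum.inr y => H.Adj x y
    | _, _ => False
  symm := ⟨by
    rintro (x | x) (y | y) h
    · exact G.adj_symm h
    · exact h.elim
    · exact h.elim
    · exact H.adj_symm h⟩
  loopless := ⟨by
    rintro (x | x) h
    · exact G.loopless.irrefl _ h
    · exact H.loopless.irrefl _ h⟩

lemma containsCopy_cycle4 {V : Type*} {H : SimpleGraph V} {a b c d : V}
    (hab : H.Adj a b) (hbc : H.Adj b c) (hcd : H.Adj c d) (hda : H.Adj d a)
    (hac : a ≠ c) (hbd : b ≠ d) : ContainsCopy H (cycleGraph 4) := by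
  refine ⟨⟨![a, b, c, d], ?_⟩, ?_⟩
  · intro u v huv
    rw [SimpleGraph.cycleGraph_adj] at huv
    fin_cases u <;> fin_cases v <;>
      first
      | exact absurd huv (by decide)
      | exact hab | exact hbc | exact hcd | exact hda
      | exact hab.symm | exact hbc.symm | exact hcd.symm | exact hda.symm
  · have h1 : a ≠ b := hab.ne
    have h2 : b ≠ c := hbc.ne
    have h3 : c ≠ d := hcd.ne
    have h4 : d ≠ a := hda.ne
    intro u v huv
    fin_cases u <;> fin_cases v <;> simp_all <;>
      first
      | rfl
      | exact absurd huv (by tauto)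
      | exact absurd huv.symm (by tauto)

lemma containsCopy_matching {V : Type*} {H : SimpleGraph V} {n : ℕ} (e : Fin n → Fin 2 → V)
    (hadj : ∀ i, H.Adj (e i 0) (e i 1))
    (hdisj : ∀ i i' k k', e i k = e i' k' → i = i') :
    ContainsCopy H (Matching n) := by
  refine ⟨⟨fun p => e p.1 p.2, ?_⟩, ?_⟩
  · rintro ⟨i, k⟩ ⟨i', k'⟩ ⟨h1, h2⟩
    dsimp only at h1 h2 ⊢
    subst h1
    fin_cases k <;> fin_cases k' <;> simp_all <;>
      first | exact hadj i | exact (hadj i).symm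
  · rintro ⟨i, k⟩ ⟨i', k'⟩ h
    have hi : i = i' := hdisj _ _ _ _ h
    subst hi
    have hk : k = k' := by
      by_contra hkk
      fin_cases k <;> fin_cases k' <;> simp_all <;>
        first | exact (hadj i).ne h | exact (hadj i).ne h.symm
    rw [hk]

lemma ContainsCopy.lift {V W U : Type*} {G : SimpleGraph V} {G' : SimpleGraph W}
    {H : SimpleGraph U} (h : ContainsCopy G H) (f : G →g G') (hf : Function.Injective f) :
    ContainsCopy G' H := by
  obtain ⟨g, hg⟩ := h
  exact ⟨f.comp g, hf.comp hg⟩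

def BAdj (a b : Fin 6) : Bool :=
  (a.val, b.val) ∈ [(0,1),(0,2),(0,3),(1,4),(1,5),(2,4),(2,5),(3,4)] ||
  (b.val, a.val) ∈ [(0,1),(0,2),(0,3),(1,4),(1,5),(2,4),(2,5),(3,4)]

def BlockB : SimpleGraph (Fin 6) where
  Adj a b := BAdj a b
  symm := by
    have h : ∀ a b : Fin 6, BAdj a b = true → BAdj b a = true := by decide
    exact ⟨fun a b hab => h a b hab⟩
  loopless := by
    have h : ∀ a : Fin 6, ¬ BAdj a a = true := by decide
    exact ⟨fun a ha => h a ha⟩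

instance : DecidableRel BlockB.Adj := fun a b => inferInstanceAs (Decidable (BAdj a b = true))

set_option maxHeartbeats 4000000 in
lemma blockB_arrows : Arrows BlockB (Matching 2) (cycleGraph 4) := by
  intro R _
  by_cases h1 : R.Adj 0 1 <;>
    by_cases h2 : R.Adj 0 2 <;>
    by_cases h3 : R.Adj 0 3 <;>
    by_cases h4 : R.Adj 1 4 <;>
    by_cases h5 : R.Adj 1 5 <;>
    by_cases h6 : R.Adj 2 4 <;>
    by_cases h7 : R.Adj 2 5 <;>
    by_cases h8 : R.Adj 3 4 <;>

      first
      | exact Or.inr (containsCopy_cycle4 ⟨by decide, h1⟩ ⟨by decide, h4⟩ ⟨by decide, (fun hh => h6 hh.symm)⟩ ⟨by decide, (fun hh => h2 hh.symm)⟩ (by decide) (by decide))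
      | exact Or.inr (containsCopy_cycle4 ⟨by decide, h1⟩ ⟨by decide, h5⟩ ⟨by decide, (fun hh => h7 hh.symm)⟩ ⟨by decide, (fun hh => h2 hh.symm)⟩ (by decide) (by decide))
      | exact Or.inr (containsCopy_cycle4 ⟨by decide, h1⟩ ⟨by decide, h4⟩ ⟨by decide, (fun hh => h8 hh.symm)⟩ ⟨by decide, (fun hh => h3 hh.symm)⟩ (by decide) (by decide))
      | exact Or.inr (containsCopy_cycle4 ⟨by decide, h2⟩ ⟨by decide, h6⟩ ⟨by decide, (fun hh => h8 hh.symm)⟩ ⟨by decide, (fun hh => h3 hh.symm)⟩ (by decide) (by decide))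
      | exact Or.inr (containsCopy_cycle4 ⟨by decide, h4⟩ ⟨by decide, (fun hh => h6 hh.symm)⟩ ⟨by decide, h7⟩ ⟨by decide, (fun hh => h5 hh.symm)⟩ (by decide) (by decide))
      | exact Or.inl (containsCopy_matching ![![0,1],![2,4]] (by intro t; fin_cases t; exacts [h1, h6]) (by decide))
      | exact Or.inl (containsCopy_matching ![![0,1],![2,5]] (by intro t; fin_cases t; exacts [h1, h7]) (by decide))
      | exact Or.inl (containsCopy_matching ![![0,1],![3,4]] (by intro t; fin_cases t; exacts [h1, h8]) (by decide))
      | exact Or.inl (containsCopy_matching ![![0,2],![1,4]] (by intro t; fin_cases t; exacts [h2, h4]) (by decide))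
      | exact Or.inl (containsCopy_matching ![![0,2],![1,5]] (by intro t; fin_cases t; exacts [h2, h5]) (by decide))
      | exact Or.inl (containsCopy_matching ![![0,2],![3,4]] (by intro t; fin_cases t; exacts [h2, h8]) (by decide))
      | exact Or.inl (containsCopy_matching ![![0,3],![1,4]] (by intro t; fin_cases t; exacts [h3, h4]) (by decide))
      | exact Or.inl (containsCopy_matching ![![0,3],![1,5]] (by intro t; fin_cases t; exacts [h3, h5]) (by decide))
      | exact Or.inl (containsCopy_matching ![![0,3],![2,4]] (by intro t; fin_cases t; exacts [h3, h6]) (by decide))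
      | exact Or.inl (containsCopy_matching ![![0,3],![2,5]] (by intro t; fin_cases t; exacts [h3, h7]) (by decide))
      | exact Or.inl (containsCopy_matching ![![1,4],![2,5]] (by intro t; fin_cases t; exacts [h4, h7]) (by decide))
      | exact Or.inl (containsCopy_matching ![![1,5],![2,4]] (by intro t; fin_cases t; exacts [h5, h6]) (by decide))
      | exact Or.inl (containsCopy_matching ![![1,5],![3,4]] (by intro t; fin_cases t; exacts [h5, h8]) (by decide))
      | exact Or.inl (containsCopy_matching ![![2,5],![3,4]] (by intro t; fin_cases t; exacts [h7, h8]) (by decide))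

lemma cycle4_arrows : Arrows (cycleGraph 4) (Matching 1) (cycleGraph 4) := by
  intro R _
  by_cases h : ∃ a b, R.Adj a b
  · obtain ⟨a, b, hab⟩ := h
    exact Or.inl (containsCopy_matching (fun _ => ![a, b]) (fun _ => hab)
      (fun i i' _ _ _ => Subsingleton.elim i i'))
  · push_neg at h
    exact Or.inr (containsCopy_cycle4 (a := 0) (b := 1) (c := 2) (d := 3)
      ⟨by decide, h 0 1⟩ ⟨by decide, h 1 2⟩ ⟨by decide, h 2 3⟩ ⟨by decide, h 3 0⟩
      (by decide) (by decide))

lemma blockB_connected : BlockB.Connected := by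
  have key : ∀ v : Fin 6, BlockB.Reachable v 0 := by
    intro v
    fin_cases v
    · rfl
    · exact (show BlockB.Adj 1 0 by decide).reachable
    · exact (show BlockB.Adj 2 0 by decide).reachable
    · exact (show BlockB.Adj 3 0 by decide).reachable
    · exact ((show BlockB.Adj 4 1 by decide).reachable).trans
        (show BlockB.Adj 1 0 by decide).reachable
    · exact ((show BlockB.Adj 5 1 by decide).reachable).trans
        (show BlockB.Adj 1 0 by decide).reachable
  exact ⟨fun u v => (key u).trans (key v).symm⟩

lemma blockB_card : BlockB.edgeSet.ncard = 8 := by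
  rw [← SimpleGraph.coe_edgeFinset, Set.ncard_coe_finset]
  decide

lemma cycle4_card : (cycleGraph 4).edgeSet.ncard = 4 := by
  rw [← SimpleGraph.coe_edgeFinset, Set.ncard_coe_finset]
  decide

section Join

variable {V₁ V₂ : Type} (G₁ : SimpleGraph V₁) (G₂ : SimpleGraph V₂) (x : V₁) (y : V₂)

def JoinG : SimpleGraph (V₁ ⊕ V₂) where
  Adj a b := (DisjUnion G₁ G₂).Adj a b ∨ (a = .inl x ∧ b = .inr y) ∨ (a = .inr y ∧ b = .inl x)
  symm := ⟨by
    intro a b h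
    rcases h with h | h | h
    · exact Or.inl ((DisjUnion G₁ G₂).adj_symm h)
    · exact Or.inr (Or.inr ⟨h.2, h.1⟩)
    · exact Or.inr (Or.inl ⟨h.2, h.1⟩)⟩
  loopless := ⟨by
    intro a h
    rcases h with h | ⟨h1, h2⟩ | ⟨h1, h2⟩
    · exact (DisjUnion G₁ G₂).loopless.irrefl a h
    · rw [h1] at h2; simp at h2
    · rw [h1] at h2; simp at h2⟩

lemma joined_connected (c₁ : G₁.Connected) (c₂ : G₂.Connected) :
    (JoinG G₁ G₂ x y).Connected := by
  let hom₁ : G₁ →g JoinG G₁ G₂ x y := ⟨Sum.inl, fun h => Or.inl h⟩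
  let hom₂ : G₂ →g JoinG G₁ G₂ x y := ⟨Sum.inr, fun h => Or.inl h⟩
  have hbr : (JoinG G₁ G₂ x y).Adj (.inl x) (.inr y) := Or.inr (Or.inl ⟨rfl, rfl⟩)
  have key : ∀ w, (JoinG G₁ G₂ x y).Reachable w (Sum.inl x) := by
    rintro (a | b)
    · exact (c₁.preconnected a x).map hom₁
    · exact ((c₂.preconnected b y).map hom₂).trans hbr.symm.reachable
  haveI : Nonempty V₁ := c₁.nonempty
  exact ⟨fun u v => (key u).trans (key v).symm⟩

lemma joined_edge_subset : (JoinG G₁ G₂ x y).edgeSet ⊆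
    (Sym2.map Sum.inl '' G₁.edgeSet) ∪ (Sym2.map Sum.inr '' G₂.edgeSet)
      ∪ {s(.inl x, .inr y)} := by
  intro e he
  induction e using Sym2.ind with
  | _ a b =>
    rw [SimpleGraph.mem_edgeSet] at he
    rcases he with h | ⟨h1, h2⟩ | ⟨h1, h2⟩
    · rcases a with a | a <;> rcases b with b | b
      · exact Or.inl (Or.inl ⟨s(a, b), h, rfl⟩)
      · exact h.elim
      · exact h.elim
      · exact Or.inl (Or.inr ⟨s(a, b), h, rfl⟩)
    · subst h1; subst h2; exact Or.inr rfl
    · subst h1; subst h2; exact Or.inr (Sym2.eq_swap)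

lemma joined_ncard [Finite V₁] [Finite V₂] :
    (JoinG G₁ G₂ x y).edgeSet.ncard ≤ G₁.edgeSet.ncard + G₂.edgeSet.ncard + 1 := by
  refine (Set.ncard_le_ncard (joined_edge_subset G₁ G₂ x y) (Set.toFinite _)).trans ?_
  refine (Set.ncard_union_le _ _).trans ?_
  have h1 := Set.ncard_union_le (Sym2.map (Sum.inl : V₁ → V₁ ⊕ V₂) '' G₁.edgeSet)
    (Sym2.map (Sum.inr : V₂ → V₁ ⊕ V₂) '' G₂.edgeSet)
  have h2 := Set.ncard_image_le (f := Sym2.map (Sum.inl : V₁ → V₁ ⊕ V₂))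
    (s := G₁.edgeSet) (Set.toFinite _)
  have h3 := Set.ncard_image_le (f := Sym2.map (Sum.inr : V₂ → V₁ ⊕ V₂))
    (s := G₂.edgeSet) (Set.toFinite _)
  have h4 : ({s(Sum.inl x, Sum.inr y)} : Set (Sym2 (V₁ ⊕ V₂))).ncard = 1 :=
    Set.ncard_singleton _
  omega

lemma containsCopy_matching_sum {R : SimpleGraph (V₁ ⊕ V₂)}
    {R₁ : SimpleGraph V₁} {R₂ : SimpleGraph V₂} {n₁ n₂ : ℕ}
    (hpush₁ : ∀ a b, R₁.Adj a b → R.Adj (.inl a) (.inl b))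
    (hpush₂ : ∀ a b, R₂.Adj a b → R.Adj (.inr a) (.inr b))
    (c₁ : ContainsCopy R₁ (Matching n₁)) (c₂ : ContainsCopy R₂ (Matching n₂)) :
    ContainsCopy R (Matching (n₁ + n₂)) := by
  obtain ⟨f₁, hf₁⟩ := c₁
  obtain ⟨f₂, hf₂⟩ := c₂
  refine containsCopy_matching
    (fun i k => if h : (i : ℕ) < n₁ then Sum.inl (f₁ (⟨i, h⟩, k))
      else Sum.inr (f₂ (⟨(i : ℕ) - n₁, by have := i.isLt; omega⟩, k))) ?_ ?_
  · intro i
    by_cases h : (i : ℕ) < n₁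
    · simp only [dif_pos h]
      exact hpush₁ _ _ (f₁.map_adj ⟨rfl, Fin.zero_ne_one⟩)
    · simp only [dif_neg h]
      exact hpush₂ _ _ (f₂.map_adj ⟨rfl, Fin.zero_ne_one⟩)
  · intro i i' k k' h
    by_cases hi : (i : ℕ) < n₁ <;> by_cases hi' : (i' : ℕ) < n₁ <;>
      simp only [dif_pos, dif_neg, hi, hi'] at h
    · have h3 : (i : ℕ) = (i' : ℕ) := congrArg (fun p => p.1.val) (hf₁ (Sum.inl_injective h))
      exact Fin.ext h3
    · exact absurd h (by simp)
    · exact absurd h (by simp)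
    · have h3 : (i : ℕ) - n₁ = (i' : ℕ) - n₁ :=
        congrArg (fun p => p.1.val) (hf₂ (Sum.inr_injective h))
      have := i.isLt
      have := i'.isLt
      exact Fin.ext (by omega)

lemma joined_arrows {n₁ n₂ : ℕ}
    (a₁ : Arrows G₁ (Matching n₁) (cycleGraph 4))
    (a₂ : Arrows G₂ (Matching n₂) (cycleGraph 4)) :
    Arrows (JoinG G₁ G₂ x y) (Matching (n₁ + n₂)) (cycleGraph 4) := by
  intro R hR
  have hle₁ : R.comap Sum.inl ≤ G₁ := by
    intro a b h
    rcases hR h with h' | ⟨h1, h2⟩ | ⟨h1, h2⟩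
    · exact h'
    · simp at h2
    · simp at h1
  have hle₂ : R.comap Sum.inr ≤ G₂ := by
    intro a b h
    rcases hR h with h' | ⟨h1, h2⟩ | ⟨h1, h2⟩
    · exact h'
    · simp at h1
    · simp at h2
  rcases a₁ (R.comap Sum.inl) hle₁ with red₁ | blue₁
  · rcases a₂ (R.comap Sum.inr) hle₂ with red₂ | blue₂
    · exact Or.inl (containsCopy_matching_sum (fun a b h => h) (fun a b h => h) red₁ red₂)
    · refine Or.inr (blue₂.lift ⟨Sum.inr, fun {a b} h => ?_⟩ Sum.inr_injective)
      exact ⟨Or.inl h.1, h.2⟩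
  · refine Or.inr (blue₁.lift ⟨Sum.inl, fun {a b} h => ?_⟩ Sum.inl_injective)
    exact ⟨Or.inl h.1, h.2⟩

end Join

def Good (n : ℕ) : Prop :=
  ∃ (V : Type) (G : SimpleGraph V), Finite V ∧ G.Connected ∧
    G.edgeSet.ncard ≤ (9 * n - 1) / 2 ∧ Arrows G (Matching n) (cycleGraph 4)

lemma good_one : Good 1 :=
  ⟨Fin 4, cycleGraph 4, inferInstance, cycleGraph_connected, by rw [cycle4_card], cycle4_arrows⟩

lemma good_two : Good 2 :=
  ⟨Fin 6, BlockB, inferInstance, blockB_connected, by rw [blockB_card], blockB_arrows⟩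

lemma good_step {n : ℕ} (hn : 1 ≤ n) (h : Good n) : Good (n + 2) := by
  obtain ⟨V, G, hfin, hconn, hcard, harr⟩ := h
  haveI := hfin
  haveI : Nonempty V := hconn.nonempty
  have x : V := Classical.arbitrary V
  refine ⟨V ⊕ Fin 6, JoinG G BlockB x 0, inferInstance,
    joined_connected G BlockB x 0 hconn blockB_connected, ?_,
    joined_arrows G BlockB x 0 harr blockB_arrows⟩
  have h1 := joined_ncard G BlockB x 0
  rw [blockB_card] at h1
  refine h1.trans ?_
  omega

lemma good_all (k : ℕ) : Good (k + 1) ∧ Good (k + 2) := by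
  induction k with
  | zero => exact ⟨good_one, good_two⟩
  | succ m ih => exact ⟨ih.2, good_step (by omega) ih.1⟩

/-- For all positive integers `n`, the connected size Ramsey number of `nK₂`
versus `C₄` is at most `⌊(9n−1)/2⌋`: there is a connected graph with at most `⌊(9n−1)/2⌋` edges
arrowing `(nK₂, C₄)`. -/
theorem connected_size_ramsey_matching_cycle4_upper (n : ℕ) (hn : 0 < n) :
    ∃ (V : Type) (G : SimpleGraph V), Finite V ∧ G.Connected ∧
      G.edgeSet.ncard ≤ (9 * n - 1) / 2 ∧ Arrows G (Matching n) (cycleGraph 4) := by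
  obtain ⟨m, rfl⟩ : ∃ m, n = m + 1 := ⟨n - 1, by omega⟩
  exact (good_all m).1
end

section
/- For all positive integers n, the connected size Ramsey number of the matching nK₂ versus the triangle C₃ equals 4n−1; that is, there exists a connected graph G with exactly 4n−1 edges such that G → (nK₂, C₃), and every connected graph G with G → (nK₂, C₃) has at least 4n−1 edges. -/
open SimpleGraph

def Chain (n : ℕ) : SimpleGraph (Fin n × Fin 3) where
  Adj a b := (a.1 = b.1 ∧ a.2 ≠ b.2) ∨
    (a.2 = 0 ∧ b.2 = 0 ∧ ((a.1 : ℕ) + 1 = b.1 ∨ (b.1 : ℕ) + 1 = a.1))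
  symm := ⟨by
    rintro a b (⟨h1, h2⟩ | ⟨h1, h2, h3⟩)
    · exact Or.inl ⟨h1.symm, h2.symm⟩
    · exact Or.inr ⟨h2, h1, h3.symm⟩⟩
  loopless := ⟨by
    rintro a (⟨_, h⟩ | ⟨_, _, h | h⟩)
    · exact h rfl
    · omega
    · omega⟩

lemma fin3_succ_ne (j : Fin 3) : j ≠ j + 1 := by revert j; decide

lemma fin3_cases {j j' : Fin 3} (h : j ≠ j') : j' = j + 1 ∨ j = j' + 1 := by
  revert h; revert j j'; decide

lemma fin3_add2_ne (j : Fin 3) : j + 1 + 1 ≠ j := by revert j; decide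

def triEdges (n : ℕ) : Finset (Sym2 (Fin n × Fin 3)) :=
  Finset.univ.image fun p : Fin n × Fin 3 => s((p.1, p.2), (p.1, p.2 + 1))

def bridgeEdges (n : ℕ) : Finset (Sym2 (Fin n × Fin 3)) :=
  Finset.univ.image fun i : Fin (n - 1) =>
    s(((⟨i.1, by have := i.isLt; omega⟩ : Fin n), (0 : Fin 3)),
      ((⟨i.1 + 1, by have := i.isLt; omega⟩ : Fin n), (0 : Fin 3)))

lemma card_triEdges (n : ℕ) : (triEdges n).card = 3 * n := by
  rw [triEdges, Finset.card_image_of_injective _ ?_, Finset.card_univ]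
  · simp [Fintype.card_prod]; ring
  · intro p q h
    rw [Sym2.eq_iff] at h
    rcases h with ⟨h1, h2⟩ | ⟨h1, h2⟩
    · rw [Prod.ext_iff] at h1; exact Prod.ext h1.1 h1.2
    · simp only [Prod.mk.injEq] at h1 h2
      have : q.2 + 1 + 1 = q.2 := by rw [← h1.2, h2.2]
      exact absurd this (fin3_add2_ne q.2)

lemma card_bridgeEdges (n : ℕ) : (bridgeEdges n).card = n - 1 := by
  rw [bridgeEdges, Finset.card_image_of_injective _ ?_, Finset.card_univ, Fintype.card_fin]
  · intro p q h
    rw [Sym2.eq_iff] at h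
    rcases h with ⟨h1, h2⟩ | ⟨h1, h2⟩ <;> rw [Prod.ext_iff] at h1 h2 <;>
      have e1 := congrArg Fin.val h1.1 <;> have e2 := congrArg Fin.val h2.1 <;>
      simp at e1 e2 <;> exact Fin.ext (by omega)

lemma disj_tri_bridge (n : ℕ) : Disjoint (triEdges n) (bridgeEdges n) := by
  rw [Finset.disjoint_left]
  intro e he he'
  simp only [triEdges, bridgeEdges, Finset.mem_image, Finset.mem_univ, true_and] at he he'
  obtain ⟨p, hp⟩ := he
  obtain ⟨i, hi⟩ := he'
  rw [← hi, Sym2.eq_iff] at hp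
  rcases hp with ⟨h1, h2⟩ | ⟨h1, h2⟩ <;> simp only [Prod.mk.injEq] at h1 h2 <;>
    have e1 := congrArg Fin.val h1.1 <;> have e2 := congrArg Fin.val h2.1 <;>
    simp at e1 e2 <;> omega

lemma chain_edgeSet (n : ℕ) :
    (Chain n).edgeSet = ↑(triEdges n ∪ bridgeEdges n) := by
  ext e
  induction e with
  | _ a b =>
    simp only [SimpleGraph.mem_edgeSet, Finset.coe_union, Set.mem_union, Finset.mem_coe]
    constructor
    · rintro (⟨h1, h2⟩ | ⟨h1, h2, h3 | h3⟩)
      · left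
        simp only [triEdges, Finset.mem_image, Finset.mem_univ, true_and]
        rcases fin3_cases h2 with h | h
        · refine ⟨a, ?_⟩
          rw [Sym2.eq_iff]
          exact Or.inl ⟨rfl, Prod.ext h1 h.symm⟩
        · refine ⟨b, ?_⟩
          rw [Sym2.eq_iff]
          exact Or.inr ⟨rfl, Prod.ext h1.symm h.symm⟩
      · right
        simp only [bridgeEdges, Finset.mem_image, Finset.mem_univ, true_and]
        refine ⟨⟨(a.1 : ℕ), by have := b.1.isLt; omega⟩, ?_⟩
        rw [Sym2.eq_iff]
        exact Or.inl ⟨Prod.ext (Fin.ext rfl) h1.symm, Prod.ext (Fin.ext h3) h2.symm⟩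
      · right
        simp only [bridgeEdges, Finset.mem_image, Finset.mem_univ, true_and]
        refine ⟨⟨(b.1 : ℕ), by have := a.1.isLt; omega⟩, ?_⟩
        rw [Sym2.eq_iff]
        exact Or.inr ⟨Prod.ext (Fin.ext rfl) h2.symm, Prod.ext (Fin.ext h3) h1.symm⟩
    · rintro (h | h) <;>
        simp only [triEdges, bridgeEdges, Finset.mem_image, Finset.mem_univ, true_and] at h <;>
        obtain ⟨p, hp⟩ := h <;> rw [Sym2.eq_iff] at hp
      · rcases hp with ⟨h1, h2⟩ | ⟨h1, h2⟩ <;> subst h1 <;> subst h2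
        · exact Or.inl ⟨rfl, fin3_succ_ne p.2⟩
        · exact Or.inl ⟨rfl, (fin3_succ_ne p.2).symm⟩
      · rcases hp with ⟨h1, h2⟩ | ⟨h1, h2⟩ <;> subst h1 <;> subst h2
        · exact Or.inr ⟨rfl, rfl, Or.inl rfl⟩
        · exact Or.inr ⟨rfl, rfl, Or.inr rfl⟩

lemma chain_ncard (n : ℕ) (hn : 0 < n) : (Chain n).edgeSet.ncard = 4 * n - 1 := by
  rw [chain_edgeSet, Set.ncard_coe_finset, Finset.card_union_of_disjoint (disj_tri_bridge n),
    card_triEdges, card_bridgeEdges]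
  omega

lemma chain_reach_base (n : ℕ) (hn : 0 < n) (u : Fin n × Fin 3) :
    (Chain n).Reachable u (⟨0, hn⟩, 0) := by
  have key : ∀ k : ℕ, ∀ hk : k < n, (Chain n).Reachable (⟨k, hk⟩, 0) (⟨0, hn⟩, 0) := by
    intro k
    induction k with
    | zero => intro hk; rfl
    | succ k ih =>
      intro hk
      have h1 : (Chain n).Adj (⟨k + 1, hk⟩, 0) (⟨k, by omega⟩, 0) :=
        Or.inr ⟨rfl, rfl, Or.inr rfl⟩
      exact h1.reachable.trans (ih (by omega))
  have step : (Chain n).Reachable u (u.1, 0) := by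
    by_cases h : u.2 = 0
    · rw [show u = (u.1, 0) from Prod.ext rfl h]
    · exact SimpleGraph.Adj.reachable (Or.inl ⟨rfl, h⟩)
  exact step.trans (key u.1 u.1.isLt)

lemma chain_connected (n : ℕ) (hn : 0 < n) : (Chain n).Connected := by
  rw [SimpleGraph.connected_iff]
  refine ⟨fun u v => ?_, ⟨(⟨0, hn⟩, 0)⟩⟩
  exact (chain_reach_base n hn u).trans (chain_reach_base n hn v).symm

lemma chain_arrows (n : ℕ) : Arrows (Chain n) (Matching n) (cycleGraph 3) := by
  intro R hR
  by_cases h : ∀ i : Fin n, ∃ j j' : Fin 3, j ≠ j' ∧ R.Adj (i, j) (i, j')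
  · left
    choose f g hne hadj using h
    refine ⟨⟨fun q => (q.1, ![f q.1, g q.1] q.2), ?_⟩, ?_⟩
    · rintro ⟨i, s⟩ ⟨i', s'⟩ hab
      obtain ⟨h1, h2⟩ := hab
      dsimp only at h1 h2 ⊢
      subst h1
      fin_cases s <;> fin_cases s'
      · exact absurd rfl h2
      · simpa using hadj i
      · simpa using (hadj i).symm
      · exact absurd rfl h2
    · rintro ⟨i, s⟩ ⟨i', s'⟩ hq
      have h1 := congrArg Prod.fst hq
      have h2 := congrArg Prod.snd hq
      change i = i' at h1
      subst h1
      refine Prod.ext rfl ?_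
      dsimp only at h2 ⊢
      fin_cases s <;> fin_cases s'
      · rfl
      · exact absurd (by simpa using h2) (hne i)
      · exact absurd (by simpa using h2.symm) (hne i)
      · rfl
  · right
    push_neg at h
    obtain ⟨i, hi⟩ := h
    refine ⟨⟨fun j => (i, j), ?_⟩, ?_⟩
    · intro a b hab
      have hab' : a ≠ b := hab.ne
      rw [SimpleGraph.sdiff_adj]
      exact ⟨Or.inl ⟨rfl, hab'⟩, hi a b hab'⟩
    · intro a b hq
      simpa using congrArg Prod.snd hq

namespace LB
open Classical

variable {V : Type} [Fintype V]

/-- Delete a set of vertices (keeping them as isolated vertices). -/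
def del (H : SimpleGraph V) (X : Set V) : SimpleGraph V where
  Adj a b := H.Adj a b ∧ a ∉ X ∧ b ∉ X
  symm := ⟨fun a b h => ⟨h.1.symm, h.2.2, h.2.1⟩⟩
  loopless := ⟨fun a h => H.loopless.irrefl a h.1⟩

lemma del_le (H : SimpleGraph V) (X : Set V) : del H X ≤ H := fun _ _ h => h.1

/-- The component `C` contains a triangle. -/
def HasTri (H : SimpleGraph V) (C : H.ConnectedComponent) : Prop :=
  ∃ a b c, H.Adj a b ∧ H.Adj a c ∧ H.Adj b c ∧ H.connectedComponentMk a = C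

noncomputable def q (H : SimpleGraph V) : ℕ := {C | HasTri H C}.ncard

noncomputable def esz (H : SimpleGraph V) : ℕ := H.edgeSet.ncard

/-- `R` covers all triangles of `H`. -/
def Cov (H R : SimpleGraph V) : Prop :=
  ∀ a b c, H.Adj a b → H.Adj a c → H.Adj b c → R.Adj a b ∨ R.Adj a c ∨ R.Adj b c

/-- Vertex-disjointness of two edges. -/
def VD (e f : Sym2 V) : Prop := ∀ v, v ∈ e → v ∉ f

/-- `M` is a matching inside `R`. -/
def IsM (R : SimpleGraph V) (M : Finset (Sym2 V)) : Prop :=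
  (↑M ⊆ R.edgeSet) ∧ (M : Set (Sym2 V)).Pairwise VD

def Good (H : SimpleGraph V) : Prop :=
  ∃ R, R ≤ H ∧ Cov H R ∧ ∀ M : Finset (Sym2 V), IsM R M → 4 * M.card ≤ esz H + q H

/-- Edges meeting `X`. -/
def MX (H : SimpleGraph V) (X : Set V) : Set (Sym2 V) :=
  {e | e ∈ H.edgeSet ∧ ∃ v, v ∈ X ∧ v ∈ e}

lemma edge_split (H : SimpleGraph V) (X : Set V) :
    esz H = esz (del H X) + (MX H X).ncard := by
  have hset : H.edgeSet = (del H X).edgeSet ∪ MX H X := by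
    ext e
    induction e with
    | _ a b =>
      simp only [SimpleGraph.mem_edgeSet, Set.mem_union, MX, Set.mem_setOf_eq,
        SimpleGraph.mem_edgeSet]
      constructor
      · intro h
        by_cases ha : a ∈ X
        · exact Or.inr ⟨h, a, ha, by simp⟩
        · by_cases hb : b ∈ X
          · exact Or.inr ⟨h, b, hb, by simp⟩
          · exact Or.inl ⟨h, ha, hb⟩
      · rintro (h | h)
        · exact h.1
        · exact h.1
  have hdisj : Disjoint (del H X).edgeSet (MX H X) := by
    rw [Set.disjoint_left]
    intro e he he'
    induction e with
    | _ a b =>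
      obtain ⟨_, v, hv, hve⟩ := he'
      rw [SimpleGraph.mem_edgeSet] at he
      rcases Sym2.mem_iff.1 hve with rfl | rfl
      · exact he.2.1 hv
      · exact he.2.2 hv
  rw [esz, esz, hset, Set.ncard_union_eq hdisj (Set.toFinite _) (Set.toFinite _)]

noncomputable def phi (H : SimpleGraph V) (X : Set V) :
    (del H X).ConnectedComponent → H.ConnectedComponent :=
  ConnectedComponent.map (Hom.ofLE (del_le H X))

lemma phi_mk (H : SimpleGraph V) (X : Set V) (v : V) :
    phi H X ((del H X).connectedComponentMk v) = H.connectedComponentMk v :=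
  ConnectedComponent.map_mk _ v

lemma mem_supp_phi {H : SimpleGraph V} {X : Set V} {C' : (del H X).ConnectedComponent}
    {u : V} (h : u ∈ C'.supp) : u ∈ (phi H X C').supp := by
  rw [ConnectedComponent.mem_supp_iff] at h ⊢
  rw [← h, phi_mk]

lemma walk_transfer {H : SimpleGraph V} {X : Set V} {K L : H.ConnectedComponent}
    (hX : X ⊆ K.supp) (hne : L ≠ K) :
    ∀ {u w : V}, H.Walk u w → H.connectedComponentMk u = L → (del H X).Reachable u w := by
  intro u w p
  induction p with
  | nil => intro _; exact Reachable.refl _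
  | @cons u y w h p ih =>
    intro hu
    have hyL : H.connectedComponentMk y = L := by
      rw [← hu]; exact (ConnectedComponent.eq.2 h.reachable).symm
    have hux : u ∉ X := by
      intro hmem
      exact hne (hu ▸ (ConnectedComponent.mem_supp_iff _ _).1 (hX hmem))
    have hyx : y ∉ X := by
      intro hmem
      exact hne (hyL ▸ (ConnectedComponent.mem_supp_iff _ _).1 (hX hmem))
    exact (SimpleGraph.Adj.reachable (⟨h, hux, hyx⟩ : (del H X).Adj u y)).trans (ih hyL)

lemma supp_stable {H : SimpleGraph V} {X : Set V} {K : H.ConnectedComponent}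
    (hX : X ⊆ K.supp) {C' : (del H X).ConnectedComponent}
    (hne : phi H X C' ≠ K) : C'.supp = (phi H X C').supp := by
  apply Set.Subset.antisymm (fun u h => mem_supp_phi h)
  intro v hv
  obtain ⟨u₀, rfl⟩ := C'.exists_rep
  have hu₀ : u₀ ∈ (phi H X _).supp := mem_supp_phi (by rw [ConnectedComponent.mem_supp_iff])
  rw [ConnectedComponent.mem_supp_iff] at hv hu₀
  have hreach : H.Reachable v u₀ := ConnectedComponent.eq.1 (hv.trans hu₀.symm)
  have := walk_transfer hX hne hreach.some hv
  refine (ConnectedComponent.mem_supp_iff _ _).2 ?_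
  exact (ConnectedComponent.eq.2 this)

lemma hasTri_phi {H : SimpleGraph V} {X : Set V} {C' : (del H X).ConnectedComponent}
    (h : HasTri (del H X) C') : HasTri H (phi H X C') := by
  obtain ⟨a, b, c, h1, h2, h3, h4⟩ := h
  exact ⟨a, b, c, h1.1, h2.1, h3.1, by rw [← h4, phi_mk]⟩

lemma q_del (H : SimpleGraph V) (X : Set V) {K : H.ConnectedComponent}
    (hK : HasTri H K) (hX : X ⊆ K.supp) :
    q (del H X) + 1 ≤ q H + {C' | HasTri (del H X) C' ∧ phi H X C' = K}.ncard := by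
  classical
  set A₁ : Set ((del H X).ConnectedComponent) :=
    {C' | HasTri (del H X) C' ∧ phi H X C' = K} with hA₁
  set A₂ : Set ((del H X).ConnectedComponent) :=
    {C' | HasTri (del H X) C' ∧ phi H X C' ≠ K} with hA₂
  have hsplit : {C' | HasTri (del H X) C'} = A₁ ∪ A₂ := by
    ext C'; by_cases h : phi H X C' = K <;> simp [hA₁, hA₂, h]
  have hdisj : Disjoint A₁ A₂ := by
    rw [Set.disjoint_left]; rintro C' ⟨_, h1⟩ ⟨_, h2⟩; exact h2 h1
  have hq' : q (del H X) = A₁.ncard + A₂.ncard := by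
    rw [q, hsplit, Set.ncard_union_eq hdisj (Set.toFinite _) (Set.toFinite _)]
  have hA2le : A₂.ncard ≤ ({C | HasTri H C} \ {K}).ncard := by
    apply Set.ncard_le_ncard_of_injOn (phi H X)
    · rintro C' ⟨h1, h2⟩
      exact ⟨hasTri_phi h1, h2⟩
    · rintro C₁ ⟨_, h1⟩ C₂ ⟨_, h2⟩ heq
      apply ConnectedComponent.supp_injective
      rw [supp_stable hX h1, supp_stable hX h2, heq]
  have hKmem : ({C | HasTri H C} \ {K}).ncard + 1 = q H :=
    Set.ncard_diff_singleton_add_one (show K ∈ {C | HasTri H C} from hK) (Set.toFinite _)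
  omega

lemma frontier {H : SimpleGraph V} {X : Set V} {C' : (del H X).ConnectedComponent} :
    ∀ {u z : V}, H.Walk u z → u ∉ X → (del H X).connectedComponentMk u = C' → z ∈ X →
    ∃ a b, H.Adj a b ∧ a ∉ X ∧ b ∈ X ∧ a ∈ C'.supp := by
  intro u z p
  induction p with
  | nil => intro hu _ hz; exact absurd hz hu
  | @cons u y z h p ih =>
    intro hu hC hz
    by_cases hy : y ∈ X
    · exact ⟨u, y, h, hu, hy, by rw [ConnectedComponent.mem_supp_iff]; exact hC⟩
    · have hadj : (del H X).Adj u y := ⟨h, hu, hy⟩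
      exact ih hy (by rw [← hC]; exact (ConnectedComponent.eq.2 hadj.reachable).symm) hz

lemma gadget (H : SimpleGraph V) (X : Set V) (unit : SimpleGraph V)
    (K : H.ConnectedComponent) (hKtri : HasTri H K) (hX : X ⊆ K.supp)
    (hunit : unit ≤ H)
    (hmatch : ∀ e f, e ∈ unit.edgeSet → f ∈ unit.edgeSet → e ≠ f → ¬ VD e f)
    (hcov : ∀ a b c, H.Adj a b → H.Adj a c → H.Adj b c →
        ¬(a ∉ X ∧ b ∉ X ∧ c ∉ X) → unit.Adj a b ∨ unit.Adj a c ∨ unit.Adj b c)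
    (hcount : {C' | HasTri (del H X) C' ∧ phi H X C' = K}.ncard + 3 ≤ (MX H X).ncard)
    (hgood : Good (del H X)) : Good H := by
  classical
  obtain ⟨R', hR'le, hR'cov, hR'bound⟩ := hgood
  refine ⟨unit ⊔ R', sup_le hunit (le_trans hR'le (del_le H X)), ?_, ?_⟩
  · intro a b c h1 h2 h3
    by_cases hX3 : a ∉ X ∧ b ∉ X ∧ c ∉ X
    · obtain ⟨ha, hb, hc⟩ := hX3
      rcases hR'cov a b c ⟨h1, ha, hb⟩ ⟨h2, ha, hc⟩ ⟨h3, hb, hc⟩ with h | h | h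
      · exact Or.inl ((sup_adj _ _ _ _).2 (Or.inr h))
      · exact Or.inr (Or.inl ((sup_adj _ _ _ _).2 (Or.inr h)))
      · exact Or.inr (Or.inr ((sup_adj _ _ _ _).2 (Or.inr h)))
    · rcases hcov a b c h1 h2 h3 hX3 with h | h | h
      · exact Or.inl ((sup_adj _ _ _ _).2 (Or.inl h))
      · exact Or.inr (Or.inl ((sup_adj _ _ _ _).2 (Or.inl h)))
      · exact Or.inr (Or.inr ((sup_adj _ _ _ _).2 (Or.inl h)))
  · intro M hM
    set M₁ := M.filter (fun e => e ∈ unit.edgeSet) with hM₁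
    set M₂ := M.filter (fun e => ¬ e ∈ unit.edgeSet) with hM₂
    have hcard : M₁.card + M₂.card = M.card :=
      Finset.card_filter_add_card_filter_not _
    have hM₁card : M₁.card ≤ 1 := by
      rw [Finset.card_le_one]
      intro e he f hf
      by_contra hne
      have he' := Finset.mem_filter.1 he
      have hf' := Finset.mem_filter.1 hf
      exact hmatch e f he'.2 hf'.2 hne (hM.2 he'.1 hf'.1 hne)
    have hM₂sub : IsM R' M₂ := by
      constructor
      · intro e he'
        have he'' := Finset.mem_filter.1 he'
        have hmem := hM.1 he''.1
        rw [SimpleGraph.edgeSet_sup] at hmem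
        rcases hmem with h | h
        · exact absurd h he''.2
        · exact h
      · intro e he f hf hne
        exact hM.2 (Finset.mem_coe.2 (Finset.mem_filter.1 (Finset.mem_coe.1 he)).1)
          (Finset.mem_coe.2 (Finset.mem_filter.1 (Finset.mem_coe.1 hf)).1) hne
    have h2 := hR'bound M₂ hM₂sub
    have hq := q_del H X hKtri hX
    have hesz := edge_split H X
    omega

lemma share_of_three {X : Set V} {t₁ t₂ t₃ : V} (hX : X = {t₁, t₂, t₃})
    {a b c d : V} (hab : a ≠ b) (hcd : c ≠ d)
    (ha : a ∈ X) (hb : b ∈ X) (hc : c ∈ X) (hd : d ∈ X)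
    (hvd : VD s(a, b) s(c, d)) : False := by
  classical
  have hac : a ≠ c := fun h => hvd a (by simp) (by simp [h])
  have had : a ≠ d := fun h => hvd a (by simp) (by simp [h])
  have hbc : b ≠ c := fun h => hvd b (by simp) (by simp [h])
  have hbd : b ≠ d := fun h => hvd b (by simp) (by simp [h])
  subst hX
  simp only [Set.mem_insert_iff, Set.mem_singleton_iff] at ha hb hc hd
  rcases ha with rfl | rfl | rfl <;> rcases hb with rfl | rfl | rfl <;>
    rcases hc with rfl | rfl | rfl <;> rcases hd with rfl | rfl | rfl <;>
    simp_all

lemma caseA (H : SimpleGraph V) (t₁ t₂ t₃ : V)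
    (h12 : H.Adj t₁ t₂) (h13 : H.Adj t₁ t₃) (h23 : H.Adj t₂ t₃)
    (hfl : ∀ x ∈ ({t₁, t₂, t₃} : Set V), ∀ u v, H.Adj x u → H.Adj x v → H.Adj u v →
        u ∈ ({t₁, t₂, t₃} : Set V) ∨ v ∈ ({t₁, t₂, t₃} : Set V))
    (hgood : Good (del H {t₁, t₂, t₃})) : Good H := by
  classical
  set X : Set V := {t₁, t₂, t₃} with hXdef
  set K := H.connectedComponentMk t₁ with hK
  have ht1 : t₁ ∈ X := by simp [hXdef]
  have ht2 : t₂ ∈ X := by simp [hXdef]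
  have ht3 : t₃ ∈ X := by simp [hXdef]
  have hXK : X ⊆ K.supp := by
    intro x hx
    rw [ConnectedComponent.mem_supp_iff, hK]
    rcases hx with rfl | rfl | rfl
    · rfl
    · exact ConnectedComponent.eq.2 h12.symm.reachable
    · exact ConnectedComponent.eq.2 h13.symm.reachable
  set unit : SimpleGraph V :=
    { Adj := fun a b => H.Adj a b ∧ a ∈ X ∧ b ∈ X
      symm := ⟨fun a b h => ⟨h.1.symm, h.2.2, h.2.1⟩⟩
      loopless := ⟨fun a h => H.loopless.irrefl a h.1⟩ } with hunitdef
  have hunitadj : ∀ a b, unit.Adj a b ↔ (H.Adj a b ∧ a ∈ X ∧ b ∈ X) := fun a b => Iff.rfl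
  apply gadget H X unit K ⟨t₁, t₂, t₃, h12, h13, h23, rfl⟩ hXK (fun a b h => h.1) ?_ ?_ ?_ hgood
  · -- hmatch
    intro e f he hf hne hvd
    induction e with
    | _ a b =>
      induction f with
      | _ c d =>
        rw [SimpleGraph.mem_edgeSet] at he hf
        exact share_of_three hXdef he.1.ne hf.1.ne he.2.1 he.2.2 hf.2.1 hf.2.2 hvd
  · -- hcov
    intro a b c h1 h2 h3 hX3
    push_neg at hX3
    by_cases ha : a ∈ X
    · rcases hfl a ha b c h1 h2 h3 with hb | hc
      · exact Or.inl ⟨h1, ha, hb⟩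
      · exact Or.inr (Or.inl ⟨h2, ha, hc⟩)
    · by_cases hb : b ∈ X
      · rcases hfl b hb a c h1.symm h3 h2 with ha' | hc
        · exact Or.inl ⟨h1, ha', hb⟩
        · exact Or.inr (Or.inr ⟨h3, hb, hc⟩)
      · have hc := hX3 ha hb
        rcases hfl c hc a b h2.symm h3.symm h1 with ha' | hb'
        · exact Or.inr (Or.inl ⟨h2, ha', hc⟩)
        · exact Or.inr (Or.inr ⟨h3, hb', hc⟩)
  · -- hcount
    set A₁ := {C' | HasTri (del H X) C' ∧ phi H X C' = K} with hA₁
    set cross := {e | e ∈ MX H X ∧ ∃ v, v ∈ e ∧ v ∉ X} with hcross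
    set tri3 : Set (Sym2 V) := {s(t₁, t₂), s(t₁, t₃), s(t₂, t₃)} with htri3
    have hwit : ∀ C' ∈ A₁, ∃ p : V × V, H.Adj p.1 p.2 ∧ p.1 ∉ X ∧ p.2 ∈ X ∧ p.1 ∈ C'.supp := by
      rintro C' ⟨⟨a, b, c, ha1, _, _, hmk⟩, hphi⟩
      have haX : a ∉ X := ha1.2.1
      have hreach : H.Reachable a t₁ := by
        apply ConnectedComponent.eq.1
        rw [show H.connectedComponentMk a = phi H X C' from by rw [← hmk, phi_mk], hphi, hK]
      obtain ⟨u, w, h1, h2, h3, h4⟩ := frontier hreach.some haX hmk ht1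
      exact ⟨(u, w), h1, h2, h3, h4⟩
    have hA1cross : A₁.ncard ≤ cross.ncard := by
      have : ∀ C' ∈ A₁, ∃ e : Sym2 V, e ∈ cross ∧ ∃ u w, e = s(u, w) ∧ u ∉ X ∧ w ∈ X ∧
          u ∈ C'.supp := by
        intro C' hC'
        obtain ⟨⟨u, w⟩, h1, h2, h3, h4⟩ := hwit C' hC'
        refine ⟨s(u, w), ⟨⟨(SimpleGraph.mem_edgeSet H).2 h1, w, h3, by simp⟩, u, by simp, h2⟩,
          u, w, rfl, h2, h3, h4⟩
      choose f hf using this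
      apply Set.ncard_le_ncard_of_injOn (fun C' => if h : C' ∈ A₁ then f C' h else s(t₁, t₂))
      · intro C' hC'
        show (if h : C' ∈ A₁ then f C' h else s(t₁, t₂)) ∈ cross
        rw [dif_pos hC']
        exact (hf C' hC').1
      · intro C₁ hC₁ C₂ hC₂ heq
        dsimp only at heq
        rw [dif_pos hC₁, dif_pos hC₂] at heq
        obtain ⟨u₁, w₁, he₁, hu₁, hw₁, hs₁⟩ := (hf C₁ hC₁).2
        obtain ⟨u₂, w₂, he₂, hu₂, hw₂, hs₂⟩ := (hf C₂ hC₂).2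
        have : u₂ ∈ s(u₁, w₁) := by rw [← he₁, heq, he₂]; simp
        rcases Sym2.mem_iff.1 this with rfl | rfl
        · rw [ConnectedComponent.mem_supp_iff] at hs₁ hs₂
          rw [← hs₁, ← hs₂]
        · exact absurd hw₁ hu₂
    have htri3sub : tri3 ⊆ MX H X := by
      rintro e (rfl | rfl | rfl)
      · exact ⟨(SimpleGraph.mem_edgeSet H).2 h12, t₁, ht1, by simp⟩
      · exact ⟨(SimpleGraph.mem_edgeSet H).2 h13, t₁, ht1, by simp⟩
      · exact ⟨(SimpleGraph.mem_edgeSet H).2 h23, t₂, ht2, by simp⟩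
    have hcrosssub : cross ⊆ MX H X := fun e he => he.1
    have hdisj : Disjoint tri3 cross := by
      rw [Set.disjoint_left]
      rintro e (rfl | rfl | rfl) ⟨_, v, hv, hvX⟩ <;>
        rcases Sym2.mem_iff.1 hv with rfl | rfl <;> simp_all
    have htri3card : tri3.ncard = 3 := by
      have hne12 : s(t₁, t₂) ≠ s(t₁, t₃) := by
        intro h
        rcases Sym2.eq_iff.1 h with ⟨_, h'⟩ | ⟨h', _⟩
        · exact h23.ne h'
        · exact h13.ne h'
      have hne13 : s(t₁, t₂) ≠ s(t₂, t₃) := by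
        intro h
        rcases Sym2.eq_iff.1 h with ⟨h', _⟩ | ⟨h', _⟩
        · exact h12.ne h'
        · exact h13.ne h'
      have hne23 : s(t₁, t₃) ≠ s(t₂, t₃) := by
        intro h
        rcases Sym2.eq_iff.1 h with ⟨h', _⟩ | ⟨h', _⟩
        · exact h12.ne h'
        · exact h13.ne h'
      rw [htri3, Set.ncard_insert_of_notMem (by simp [hne12, hne13]) (Set.toFinite _),
        Set.ncard_insert_of_notMem (by simp [hne23]) (Set.toFinite _), Set.ncard_singleton]
    have hunion : tri3.ncard + cross.ncard ≤ (MX H X).ncard := by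
      rw [← Set.ncard_union_eq hdisj (Set.toFinite _) (Set.toFinite _)]
      exact Set.ncard_le_ncard (Set.union_subset htri3sub hcrosssub) (Set.toFinite _)
    omega

/-- `c` is a flower vertex: it lies in two triangles meeting only at `c`. -/
def Flower (H : SimpleGraph V) (c : V) : Prop :=
  ∃ a b u v, H.Adj c a ∧ H.Adj c b ∧ H.Adj a b ∧ H.Adj c u ∧ H.Adj c v ∧ H.Adj u v ∧
    a ≠ u ∧ a ≠ v ∧ b ≠ u ∧ b ≠ v

noncomputable def A1 (H : SimpleGraph V) (c : V) : Set ((del H ({c} : Set V)).ConnectedComponent) :=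
  {C' | HasTri (del H ({c} : Set V)) C' ∧ phi H {c} C' = H.connectedComponentMk c}

/-- A stuck flower vertex: the count condition fails. -/
def Stuck (H : SimpleGraph V) (c : V) : Prop :=
  ¬ ((A1 H c).ncard + 3 ≤ (MX H ({c} : Set V)).ncard)

lemma isolated_walk {H : SimpleGraph V} {X : Set V} {x y : V} (hx : x ∈ X)
    (p : (del H X).Walk x y) : y = x := by
  cases p with
  | nil => rfl
  | cons h _ => exact absurd hx h.2.1

lemma not_mem_supp_of_hasTri {H : SimpleGraph V} {X : Set V}
    {C : (del H X).ConnectedComponent} (hC : HasTri (del H X) C) {x : V} (hx : x ∈ X) :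
    x ∉ C.supp := by
  intro hmem
  obtain ⟨a, b, c, h1, _, _, hmk⟩ := hC
  rw [ConnectedComponent.mem_supp_iff] at hmem
  have : (del H X).Reachable a x := ConnectedComponent.eq.1 (hmk.trans hmem.symm)
  have := isolated_walk hx this.symm.some
  subst this
  exact h1.2.1 hx

lemma reach_retype {H : SimpleGraph V} {X Y : Set V} {C : (del H X).ConnectedComponent}
    (hC : ∀ v ∈ C.supp, v ∉ Y) :
    ∀ {u w : V}, (del H X).Walk u w → u ∈ C.supp → (del H Y).Reachable u w := by
  intro u w p
  induction p with
  | nil => intro _; exact Reachable.refl _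
  | @cons u y w h p ih =>
    intro hu
    have hy : y ∈ C.supp := by
      rw [ConnectedComponent.mem_supp_iff] at hu ⊢
      rw [← hu]
      exact (ConnectedComponent.eq.2 h.reachable).symm
    exact (SimpleGraph.Adj.reachable
      (⟨h.1, hC u hu, hC y hy⟩ : (del H Y).Adj u y)).trans (ih hy)

lemma mx_star_mem {H : SimpleGraph V} {c x : V} (h : H.Adj c x) :
    s(c, x) ∈ MX H ({c} : Set V) :=
  ⟨(SimpleGraph.mem_edgeSet H).2 h, c, rfl, by simp⟩

/-- A stuck flower vertex has at least two triangle components hanging off it. -/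
lemma stuck_two {H : SimpleGraph V} {c : V} (hfl : Flower H c) (hst : Stuck H c) :
    ∃ C₁ C₂, C₁ ∈ A1 H c ∧ C₂ ∈ A1 H c ∧ C₁ ≠ C₂ := by
  obtain ⟨a, b, u, v, hca, hcb, hab, hcu, hcv, huv, hau, hav, hbu, hbv⟩ := hfl
  have h4 : 4 ≤ (MX H ({c} : Set V)).ncard := by
    have hsub : ({s(c, a), s(c, b), s(c, u), s(c, v)} : Set (Sym2 V)) ⊆ MX H {c} := by
      rintro e (rfl | rfl | rfl | rfl)
      exacts [mx_star_mem hca, mx_star_mem hcb, mx_star_mem hcu, mx_star_mem hcv]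
    have hcard : ({s(c, a), s(c, b), s(c, u), s(c, v)} : Set (Sym2 V)).ncard = 4 := by
      have e1 : s(c, a) ≠ s(c, b) := fun h => hab.ne (Sym2.congr_right.1 h)
      have e2 : s(c, a) ≠ s(c, u) := fun h => hau (Sym2.congr_right.1 h)
      have e3 : s(c, a) ≠ s(c, v) := fun h => hav (Sym2.congr_right.1 h)
      have e4 : s(c, b) ≠ s(c, u) := fun h => hbu (Sym2.congr_right.1 h)
      have e5 : s(c, b) ≠ s(c, v) := fun h => hbv (Sym2.congr_right.1 h)
      have e6 : s(c, u) ≠ s(c, v) := fun h => huv.ne (Sym2.congr_right.1 h)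
      rw [Set.ncard_insert_of_notMem (by simp [e1, e2, e3]) (Set.toFinite _),
        Set.ncard_insert_of_notMem (by simp [e4, e5]) (Set.toFinite _),
        Set.ncard_insert_of_notMem (by simp [e6]) (Set.toFinite _), Set.ncard_singleton]
    calc 4 = ({s(c, a), s(c, b), s(c, u), s(c, v)} : Set (Sym2 V)).ncard := hcard.symm
      _ ≤ _ := Set.ncard_le_ncard hsub (Set.toFinite _)
  have h2 : 1 < (A1 H c).ncard := by
    rw [Stuck] at hst
    omega
  obtain ⟨C₁, h1, C₂, h2', hne⟩ := (Set.one_lt_ncard (Set.toFinite _)).1 h2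
  exact ⟨C₁, C₂, h1, h2', hne⟩

lemma descent (H : SimpleGraph V)
    (hall : ∀ a b c, H.Adj a b → H.Adj a c → H.Adj b c →
      Flower H a ∨ Flower H b ∨ Flower H c)
    {a₀ b₀ c₀ : V} (h1 : H.Adj a₀ b₀) (h2 : H.Adj a₀ c₀) (h3 : H.Adj b₀ c₀) :
    ∃ c, Flower H c ∧ (A1 H c).ncard + 3 ≤ (MX H ({c} : Set V)).ncard := by
  by_contra hcon
  have hstuck : ∀ c, Flower H c → Stuck H c := fun c hf hb => hcon ⟨c, hf, hb⟩
  set P : Set (V × Set V) :=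
    {p | Flower H p.1 ∧ ∃ C', C' ∈ A1 H p.1 ∧ p.2 = C'.supp} with hP
  have hPne : P.Nonempty := by
    have hfl₀ : ∃ f, Flower H f := by
      rcases hall a₀ b₀ c₀ h1 h2 h3 with h | h | h
      exacts [⟨a₀, h⟩, ⟨b₀, h⟩, ⟨c₀, h⟩]
    obtain ⟨f, hf⟩ := hfl₀
    obtain ⟨C₁, _, hm, _, _⟩ := stuck_two hf (hstuck f hf)
    exact ⟨(f, C₁.supp), hf, C₁, hm, rfl⟩
  set N : Set ℕ := {k | ∃ p ∈ P, p.2.ncard = k} with hN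
  have hNne : N.Nonempty := by
    obtain ⟨p, hp⟩ := hPne
    exact ⟨p.2.ncard, p, hp, rfl⟩
  obtain ⟨⟨cstar, Sstar⟩, hpP, hpcard⟩ := Nat.sInf_mem hNne
  obtain ⟨hflc, Cstar, hCmem, hSeq⟩ := hpP
  obtain ⟨hCtri, hCphi⟩ := hCmem
  obtain ⟨a', b', c₂', had1, had2, had3, hmk⟩ := hCtri
  have hsupp_a : a' ∈ Cstar.supp := (ConnectedComponent.mem_supp_iff _ _).2 hmk
  have hsupp_b : b' ∈ Cstar.supp := by
    rw [ConnectedComponent.mem_supp_iff, ← hmk]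
    exact (ConnectedComponent.eq.2 had1.reachable).symm
  have hsupp_c : c₂' ∈ Cstar.supp := by
    rw [ConnectedComponent.mem_supp_iff, ← hmk]
    exact (ConnectedComponent.eq.2 had2.reachable).symm
  have key : ∀ f, Flower H f → f ∈ Cstar.supp → False := by
    intro f hfl hfsupp
    have hfne : f ≠ cstar := by
      intro h
      exact not_mem_supp_of_hasTri ⟨a', b', c₂', had1, had2, had3, hmk⟩ rfl (h ▸ hfsupp)
    obtain ⟨C₁, C₂, hm1, hm2, hne⟩ := stuck_two hfl (hstuck f hfl)
    have hone : cstar ∉ C₁.supp ∨ cstar ∉ C₂.supp := by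
      by_contra hb
      push_neg at hb
      rw [ConnectedComponent.mem_supp_iff] at hb
      exact hne (hb.1.symm.trans hb.2)
    obtain ⟨B, hBmem, hBcstar⟩ : ∃ B, B ∈ A1 H f ∧ cstar ∉ B.supp := by
      rcases hone with h | h
      exacts [⟨C₁, hm1, h⟩, ⟨C₂, hm2, h⟩]
    obtain ⟨hBtri, hBphi⟩ := hBmem
    obtain ⟨a₁, b₁, c₁, hb1, hb2, hb3, hmk1⟩ := hBtri
    have ha₁X : a₁ ∉ ({f} : Set V) := hb1.2.1
    have hreach : H.Reachable a₁ f := by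
      apply ConnectedComponent.eq.1
      rw [show H.connectedComponentMk a₁ = phi H {f} B from by rw [← hmk1, phi_mk], hBphi]
    obtain ⟨u', w', hadj', hu'X, hw'X, hu'supp⟩ := frontier hreach.some ha₁X hmk1 rfl
    have hw'f : w' = f := hw'X
    have hBsub : B.supp ⊆ Cstar.supp := by
      intro w hw
      have hru' : (del H ({f} : Set V)).Reachable w u' := by
        apply ConnectedComponent.eq.1
        rw [ConnectedComponent.mem_supp_iff] at hw hu'supp
        rw [hw, hu'supp]
      have hnc : ∀ v ∈ B.supp, v ∉ ({cstar} : Set V) := by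
        intro v hv hvc
        rw [Set.mem_singleton_iff] at hvc
        exact hBcstar (hvc ▸ hv)
      have hr1 : (del H ({cstar} : Set V)).Reachable w u' :=
        reach_retype hnc hru'.some hw
      have hadj2 : (del H ({cstar} : Set V)).Adj u' f := by
        refine ⟨hw'f ▸ hadj', ?_, ?_⟩
        · simp only [Set.mem_singleton_iff]
          intro h
          exact hBcstar (h ▸ hu'supp)
        · simp only [Set.mem_singleton_iff]
          exact hfne
      have hr2 : (del H ({cstar} : Set V)).Reachable w f := hr1.trans hadj2.reachable
      rw [ConnectedComponent.mem_supp_iff] at hfsupp ⊢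
      rw [← hfsupp]
      exact ConnectedComponent.eq.2 hr2
    have hfB : f ∉ B.supp :=
      not_mem_supp_of_hasTri ⟨a₁, b₁, c₁, hb1, hb2, hb3, hmk1⟩ rfl
    have hss : B.supp ⊂ Cstar.supp :=
      Set.ssubset_iff_subset_ne.2 ⟨hBsub, fun h => hfB (h ▸ hfsupp)⟩
    have hlt : B.supp.ncard < Cstar.supp.ncard := Set.ncard_lt_ncard hss (Set.toFinite _)
    have hmemN : B.supp.ncard ∈ N := ⟨(f, B.supp), ⟨hfl, B, ⟨⟨a₁, b₁, c₁, hb1, hb2, hb3, hmk1⟩,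
      hBphi⟩, rfl⟩, rfl⟩
    have hinf := Nat.sInf_le hmemN
    have hcc : Cstar.supp.ncard = sInf N := by
      rw [← hSeq]
      exact hpcard
    omega
  rcases hall a' b' c₂' had1.1 had2.1 had3.1 with h | h | h
  · exact key a' h hsupp_a
  · exact key b' h hsupp_b
  · exact key c₂' h hsupp_c

lemma caseB (H : SimpleGraph V) (c : V) (hfl : Flower H c)
    (hns : (A1 H c).ncard + 3 ≤ (MX H ({c} : Set V)).ncard)
    (hgood : Good (del H ({c} : Set V))) : Good H := by
  obtain ⟨a, b, u, v, hca, hcb, hab, -, -, -, -, -, -, -⟩ := hfl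
  set unit : SimpleGraph V :=
    { Adj := fun x y => H.Adj x y ∧ (x = c ∨ y = c)
      symm := ⟨fun x y h => ⟨h.1.symm, h.2.symm⟩⟩
      loopless := ⟨fun x h => H.loopless.irrefl x h.1⟩ } with hunitdef
  have hcmem : ∀ {e : Sym2 V}, e ∈ unit.edgeSet → c ∈ e := by
    intro e he
    induction e with
    | _ x y =>
      rw [SimpleGraph.mem_edgeSet] at he
      rcases he.2 with rfl | rfl
      · exact Sym2.mem_mk_left _ _
      · exact Sym2.mem_mk_right _ _
  apply gadget H ({c} : Set V) unit (H.connectedComponentMk c)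
    ⟨c, a, b, hca, hcb, hab, rfl⟩
    (by
      intro x hx
      rw [Set.mem_singleton_iff] at hx
      subst hx
      rw [ConnectedComponent.mem_supp_iff])
    (fun x y h => h.1) ?_ ?_ hns hgood
  · intro e f he hf hne hvd
    exact hvd c (hcmem he) (hcmem hf)
  · intro x y z h1 h2 h3 hX
    have : x = c ∨ y = c ∨ z = c := by
      by_contra hb
      push_neg at hb
      exact hX ⟨hb.1, hb.2.1, hb.2.2⟩
    rcases this with rfl | rfl | rfl
    · exact Or.inl ⟨h1, Or.inl rfl⟩
    · exact Or.inl ⟨h1, Or.inr rfl⟩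
    · exact Or.inr (Or.inl ⟨h2, Or.inr rfl⟩)

lemma good_of_no_triangle (H : SimpleGraph V)
    (h : ¬ ∃ a b c, H.Adj a b ∧ H.Adj a c ∧ H.Adj b c) : Good H := by
  refine ⟨⊥, bot_le, ?_, ?_⟩
  · intro a b c h1 h2 h3
    exact absurd ⟨a, b, c, h1, h2, h3⟩ h
  · intro M hM
    have : M = ∅ := by
      rw [Finset.eq_empty_iff_forall_notMem]
      intro e he
      have := hM.1 he
      rw [SimpleGraph.edgeSet_bot] at this
      exact this
    rw [this]
    simp

lemma main_claim : ∀ (N : ℕ) (H : SimpleGraph V), esz H ≤ N → Good H := by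
  intro N
  induction N with
  | zero =>
    intro H he
    apply good_of_no_triangle
    rintro ⟨a, b, c, h1, _, _⟩
    have hmem : s(a, b) ∈ H.edgeSet := (SimpleGraph.mem_edgeSet H).2 h1
    have h0 : esz H = 0 := Nat.le_antisymm he (Nat.zero_le _)
    rw [esz, Set.ncard_eq_zero (Set.toFinite _)] at h0
    rw [h0] at hmem
    exact hmem
  | succ n ih =>
    intro H he
    by_cases htri : ∃ a b c, H.Adj a b ∧ H.Adj a c ∧ H.Adj b c
    · obtain ⟨t₁, t₂, t₃, h12, h13, h23⟩ := htri
      by_cases hA : ∃ x₁ x₂ x₃ : V, (H.Adj x₁ x₂ ∧ H.Adj x₁ x₃ ∧ H.Adj x₂ x₃) ∧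
          ∀ x ∈ ({x₁, x₂, x₃} : Set V), ∀ u' v', H.Adj x u' → H.Adj x v' → H.Adj u' v' →
            u' ∈ ({x₁, x₂, x₃} : Set V) ∨ v' ∈ ({x₁, x₂, x₃} : Set V)
      · obtain ⟨x₁, x₂, x₃, ⟨g12, g13, g23⟩, hfl⟩ := hA
        apply caseA H x₁ x₂ x₃ g12 g13 g23 hfl
        apply ih
        have hsplit := edge_split H ({x₁, x₂, x₃} : Set V)
        have hmem : s(x₁, x₂) ∈ MX H ({x₁, x₂, x₃} : Set V) :=
          ⟨(SimpleGraph.mem_edgeSet H).2 g12, x₁, by simp, by simp⟩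
        have hpos : 0 < (MX H ({x₁, x₂, x₃} : Set V)).ncard :=
          (Set.ncard_pos (Set.toFinite _)).2 ⟨_, hmem⟩
        omega
      · push_neg at hA
        have hall : ∀ a b c, H.Adj a b → H.Adj a c → H.Adj b c →
            Flower H a ∨ Flower H b ∨ Flower H c := by
          intro a b c h1 h2 h3
          obtain ⟨x, hx, u', v', hu1, hu2, hu3, hu4, hu5⟩ := hA a b c ⟨h1, h2, h3⟩
          rcases hx with rfl | rfl | rfl
          · exact Or.inl ⟨b, c, u', v', h1, h2, h3, hu1, hu2, hu3,
              fun h => hu4 (by simp [h]), fun h => hu5 (by simp [h]),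
              fun h => hu4 (by simp [h]), fun h => hu5 (by simp [h])⟩
          · exact Or.inr (Or.inl ⟨a, c, u', v', h1.symm, h3, h2, hu1, hu2, hu3,
              fun h => hu4 (by simp [h]), fun h => hu5 (by simp [h]),
              fun h => hu4 (by simp [h]), fun h => hu5 (by simp [h])⟩)
          · exact Or.inr (Or.inr ⟨a, b, u', v', h2.symm, h3.symm, h1, hu1, hu2, hu3,
              fun h => hu4 (by simp [h]), fun h => hu5 (by simp [h]),
              fun h => hu4 (by simp [h]), fun h => hu5 (by simp [h])⟩)
        obtain ⟨c, hflc, hns⟩ := descent H hall h12 h13 h23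
        apply caseB H c hflc hns
        apply ih
        have hsplit := edge_split H ({c} : Set V)
        obtain ⟨a, -, -, -, hca, -⟩ := hflc
        have hpos : 0 < (MX H ({c} : Set V)).ncard :=
          (Set.ncard_pos (Set.toFinite _)).2 ⟨_, mx_star_mem hca⟩
        omega
    · exact good_of_no_triangle H htri

lemma q_le_one (G : SimpleGraph V) (hc : G.Connected) : q G ≤ 1 := by
  obtain ⟨v₀⟩ := hc.nonempty
  have hsub : {C | HasTri G C} ⊆ {G.connectedComponentMk v₀} := by
    intro C _
    simp only [Set.mem_singleton_iff]
    induction C using ConnectedComponent.ind with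
    | _ u => exact ConnectedComponent.eq.2 (hc.preconnected u v₀)
  calc q G ≤ ({G.connectedComponentMk v₀} : Set _).ncard :=
        Set.ncard_le_ncard hsub (Set.toFinite _)
    _ = 1 := Set.ncard_singleton _

theorem lower_bound (G : SimpleGraph V) (hc : G.Connected) (n : ℕ)
    (harr : Arrows G (Matching n) (cycleGraph 3)) :
    4 * n - 1 ≤ G.edgeSet.ncard := by
  classical
  obtain ⟨R, hle, hcov, hbound⟩ := main_claim (esz G) G le_rfl
  rcases harr R hle with ⟨f, hfinj⟩ | ⟨g, hginj⟩
  · set M := (Finset.univ : Finset (Fin n)).image (fun i => s(f (i, 0), f (i, 1))) with hM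
    have hcard : M.card = n := by
      rw [hM, Finset.card_image_of_injective _ ?_, Finset.card_univ, Fintype.card_fin]
      intro i j hij
      rcases Sym2.eq_iff.1 hij with ⟨hl, _⟩ | ⟨hl, _⟩
      · exact (congrArg Prod.fst (hfinj hl) : i = j)
      · have := hfinj hl
        rw [Prod.ext_iff] at this
        exact absurd this.2 (show (0 : Fin 2) ≠ 1 by decide)
    have hism : IsM R M := by
      constructor
      · intro e he
        rw [Finset.mem_coe, hM, Finset.mem_image] at he
        obtain ⟨i, -, rfl⟩ := he
        rw [SimpleGraph.mem_edgeSet]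
        exact f.map_adj (⟨rfl, show (0 : Fin 2) ≠ 1 by decide⟩ : (Matching n).Adj (i, 0) (i, 1))
      · intro e he e' he' hne v hv hv'
        rw [Finset.mem_coe, hM, Finset.mem_image] at he he'
        obtain ⟨i, -, rfl⟩ := he
        obtain ⟨j, -, rfl⟩ := he'
        have hij : i ≠ j := fun h => hne (by rw [h])
        rcases Sym2.mem_iff.1 hv with rfl | rfl <;>
          rcases Sym2.mem_iff.1 hv' with h | h <;>
          · have := hfinj h
            rw [Prod.ext_iff] at this
            exact hij this.1
    have hb := hbound M hism
    have hq := q_le_one G hc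
    rw [hcard] at hb
    have : esz G = G.edgeSet.ncard := rfl
    omega
  · have h01 : (cycleGraph 3).Adj 0 1 := by
      rw [SimpleGraph.cycleGraph_adj]; decide
    have h12 : (cycleGraph 3).Adj 1 2 := by
      rw [SimpleGraph.cycleGraph_adj]; decide
    have h02 : (cycleGraph 3).Adj 0 2 := by
      rw [SimpleGraph.cycleGraph_adj]; decide
    have a01 := g.map_adj h01
    have a12 := g.map_adj h12
    have a02 := g.map_adj h02
    rw [SimpleGraph.sdiff_adj] at a01 a12 a02
    rcases hcov (g 0) (g 1) (g 2) a01.1 a02.1 a12.1 with h | h | h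
    · exact absurd h a01.2
    · exact absurd h a02.2
    · exact absurd h a12.2

end LB

/-- For all positive integers `n`, the connected size Ramsey number of `nK₂`
versus the triangle `C₃` equals `4n−1`: there is a connected graph with exactly `4n−1` edges
arrowing `(nK₂, C₃)`, and every connected graph arrowing `(nK₂, C₃)` has at least `4n−1`
edges. -/
theorem connected_size_ramsey_matching_triangle (n : ℕ) (hn : 0 < n) :
    (∃ (V : Type) (G : SimpleGraph V), Finite V ∧ G.Connected ∧
        G.edgeSet.ncard = 4 * n - 1 ∧ Arrows G (Matching n) (cycleGraph 3)) ∧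
    (∀ (V : Type), Finite V → ∀ G : SimpleGraph V,
        G.Connected → Arrows G (Matching n) (cycleGraph 3) →
        4 * n - 1 ≤ G.edgeSet.ncard) := by
  constructor
  · exact ⟨Fin n × Fin 3, Chain n, inferInstance, chain_connected n hn, chain_ncard n hn,
      chain_arrows n⟩
  · intro V hfin G hconn harr
    have : Fintype V := Fintype.ofFinite V
    exact LB.lower_bound G hconn n harr
end

section
/- For every positive integer n and every integer ℓ with 3 ≤ ℓ ≤ ⌊(5n−3)/2⌋, the cycle Cℓ on ℓ vertices satisfies Cℓ ↛ (nK₂, P₃): there is a red-blue colouring of the edges of Cℓ (colouring edges consecutively along the cycle, alternately two red and one blue) that contains neither a red matching with n edges nor a blue path on 3 vertices. -/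
open SimpleGraph

section AuxCNA

open SimpleGraph

variable {m : ℕ}

/-- The red subgraph: edge `{i, i+1}` is red iff `i % 3 ≠ 2`. -/
def RedC (m : ℕ) : SimpleGraph (Fin (m + 3)) :=
  SimpleGraph.fromRel (fun u v => (v - u).val = 1 ∧ u.val % 3 ≠ 2)

lemma val_one_cna : ((1 : Fin (m + 3))).val = 1 := by
  simp [Fin.val_one]

lemma add_one_val_cna (u : Fin (m + 3)) :
    (u.val + 1 = m + 3 ∧ (u + 1).val = 0) ∨ (u.val + 1 < m + 3 ∧ (u + 1).val = u.val + 1) := by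
  have h : (u + 1).val = (u.val + 1) % (m + 3) := by rw [Fin.add_def, val_one_cna]
  have hu : u.val < m + 3 := u.isLt
  rcases Nat.lt_or_ge (u.val + 1) (m + 3) with hlt | hge
  · exact Or.inr ⟨hlt, by rw [h, Nat.mod_eq_of_lt hlt]⟩
  · have he : u.val + 1 = m + 3 := by omega
    exact Or.inl ⟨he, by rw [h, he, Nat.mod_self]⟩

lemma eq_add_one_of_sub_cna {u v : Fin (m + 3)} (h : (v - u).val = 1) : v = u + 1 := by
  have h1 : v - u = 1 := Fin.ext (by rw [h, val_one_cna])
  exact (sub_eq_iff_eq_add.mp h1).trans (add_comm 1 u)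

lemma redC_adj {u v : Fin (m + 3)} :
    (RedC m).Adj u v ↔ u ≠ v ∧
      (((v - u).val = 1 ∧ u.val % 3 ≠ 2) ∨ ((u - v).val = 1 ∧ v.val % 3 ≠ 2)) := by
  rw [RedC, SimpleGraph.fromRel_adj]

lemma redC_le_cycle : RedC m ≤ cycleGraph (m + 3) := by
  intro u v h
  rw [redC_adj] at h
  obtain ⟨hne, h | h⟩ := h <;> rw [SimpleGraph.cycleGraph_adj']
  · exact Or.inr h.1
  · exact Or.inl h.1

/-- Extract the edge index of a red edge. -/
lemma redC_edge {u v : Fin (m + 3)} (h : (RedC m).Adj u v) :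
    ∃ e : Fin (m + 3), e.val % 3 ≠ 2 ∧
      ((u = e ∧ v = e + 1) ∨ (v = e ∧ u = e + 1)) := by
  rw [redC_adj] at h
  obtain ⟨hne, h | h⟩ := h
  · exact ⟨u, h.2, Or.inl ⟨rfl, eq_add_one_of_sub_cna h.1⟩⟩
  · exact ⟨v, h.2, Or.inr ⟨rfl, eq_add_one_of_sub_cna h.1⟩⟩

/-- Characterisation of blue edges. -/
lemma blueC_adj {u v : Fin (m + 3)} (h : (cycleGraph (m + 3) \ RedC m).Adj u v) :
    (v = u + 1 ∧ u.val % 3 = 2) ∨ (u = v + 1 ∧ v.val % 3 = 2) := by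
  obtain ⟨hadj, hnr⟩ := h
  have hne : u ≠ v := hadj.ne
  rw [redC_adj] at hnr
  rw [SimpleGraph.cycleGraph_adj'] at hadj
  rcases hadj with h | h
  · refine Or.inr ⟨eq_add_one_of_sub_cna h, ?_⟩
    by_contra hc
    exact hnr ⟨hne, Or.inr ⟨h, hc⟩⟩
  · refine Or.inl ⟨eq_add_one_of_sub_cna h, ?_⟩
    by_contra hc
    exact hnr ⟨hne, Or.inl ⟨h, hc⟩⟩

end AuxCNA

/-- For every positive integer `n` and every `ℓ` with
`3 ≤ ℓ ≤ ⌊(5n−3)/2⌋`, the cycle `Cℓ` does not arrow `(nK₂, P₃)`. -/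
theorem cycle_not_arrows_matching_path3 (n ℓ : ℕ) (hn : 0 < n) (h3 : 3 ≤ ℓ)
    (hℓ : ℓ ≤ (5 * n - 3) / 2) :
    ¬ Arrows (cycleGraph ℓ) (Matching n) (pathGraph 3) := by
  -- from the hypotheses, `n ≥ 2` and `ℓ ≤ 3n - 3`
  have hn2 : 2 ≤ n := by omega
  have hl3 : ℓ ≤ 3 * n - 3 := by omega
  obtain ⟨m, rfl⟩ : ∃ m, ℓ = m + 3 := ⟨ℓ - 3, by omega⟩
  intro hA
  rcases hA (RedC m) redC_le_cycle with ⟨f, hf⟩ | ⟨f, hf⟩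
  · -- red copy of the matching: impossible
    -- for each `i`, pick the edge index of the red edge `f (i,0) ~ f (i,1)`
    have hadj : ∀ i : Fin n, (RedC m).Adj (f (i, 0)) (f (i, 1)) := by
      intro i
      exact f.map_adj (show (Matching n).Adj (i, 0) (i, 1) from ⟨rfl, by simp⟩)
    choose e he hmem using fun i => redC_edge (hadj i)
    -- both `e i` and `e i + 1` are vertices of the `i`-th matching edge
    have hm1 : ∀ i, f (i, 0) = e i ∨ f (i, 1) = e i := by
      intro i; rcases hmem i with ⟨h1, _⟩ | ⟨h1, _⟩
      exacts [Or.inl h1, Or.inr h1]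
    have hm2 : ∀ i, f (i, 0) = e i + 1 ∨ f (i, 1) = e i + 1 := by
      intro i; rcases hmem i with ⟨_, h2⟩ | ⟨_, h2⟩
      exacts [Or.inr h2, Or.inl h2]
    -- no vertex is shared by two distinct matching-edge images
    have hshare : ∀ i j : Fin n, i ≠ j → ∀ w : Fin (m + 3),
        (f (i, 0) = w ∨ f (i, 1) = w) → (f (j, 0) = w ∨ f (j, 1) = w) → False := by
      intro i j hij w hi hj
      rcases hi with hi | hi <;> rcases hj with hj | hj <;>
        exact hij (congrArg Prod.fst (hf (hi.trans hj.symm)))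
    -- the block map `i ↦ (e i).val / 3` is injective into `Fin (n-1)`
    have hbound : ∀ i : Fin n, (e i).val / 3 < n - 1 := by
      intro i
      have : (e i).val < m + 3 := (e i).isLt
      have h2 := he i
      omega
    have hBinj : Function.Injective (fun i : Fin n => (⟨(e i).val / 3, hbound i⟩ : Fin (n - 1))) := by
      intro i j hij
      by_contra hne
      simp only [Fin.mk.injEq] at hij
      have hi2 := he i
      have hj2 := he j
      have hlt : (e i).val < m + 3 := (e i).isLt
      have hlt' : (e j).val < m + 3 := (e j).isLt
      -- same block, neither ≡ 2 mod 3: vals are equal or consecutive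
      have hcase : (e i).val = (e j).val ∨ (e i).val + 1 = (e j).val ∨
          (e j).val + 1 = (e i).val := by omega
      rcases hcase with hc | hc | hc
      · -- same edge: shared vertex `e i`
        have : e i = e j := Fin.ext hc
        exact hshare i j hne (e i) (hm1 i) (this ▸ hm1 j)
      · -- `e j = e i + 1`: shared vertex
        have : e j = e i + 1 := by
          apply Fin.ext
          rcases add_one_val_cna (e i) with ⟨h1, h2⟩ | ⟨h1, h2⟩ <;> omega
        exact hshare i j hne (e i + 1) (hm2 i) (this ▸ hm1 j)
      · have : e i = e j + 1 := by
          apply Fin.ext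
          rcases add_one_val_cna (e j) with ⟨h1, h2⟩ | ⟨h1, h2⟩ <;> omega
        exact hshare i j hne (e j + 1) (this ▸ hm1 i) (hm2 j)
    have := Fintype.card_le_of_injective _ hBinj
    simp only [Fintype.card_fin] at this
    omega
  · -- blue copy of `P₃`: impossible
    have h01 : (cycleGraph (m + 3) \ RedC m).Adj (f 1) (f 0) :=
      (f.map_adj (show (pathGraph 3).Adj 0 1 by rw [pathGraph_adj]; simp)).symm
    have h12 : (cycleGraph (m + 3) \ RedC m).Adj (f 1) (f 2) :=
      f.map_adj (show (pathGraph 3).Adj 1 2 by rw [pathGraph_adj]; simp)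
    have hac : f 0 ≠ f 2 := fun h => by simpa using hf h
    have hb0 := blueC_adj h01
    have hb2 := blueC_adj h12
    rcases hb0 with ⟨h1, h2⟩ | ⟨h1, h2⟩ <;> rcases hb2 with ⟨h3, h4⟩ | ⟨h3, h4⟩
    · exact hac (h1.trans h3.symm)
    · -- f 0 = f 1 + 1, f 1 = f 2 + 1, with (f 1).val % 3 = 2 and (f 2).val % 3 = 2
      have hv : (f 1).val = ((f 2) + 1).val := by rw [h3]
      rcases add_one_val_cna (f 2) with ⟨ha, hb⟩ | ⟨ha, hb⟩ <;> omega
    · have hv : (f 1).val = ((f 0) + 1).val := by rw [h1]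
      rcases add_one_val_cna (f 0) with ⟨ha, hb⟩ | ⟨ha, hb⟩ <;> omega
    · exact hac (add_right_cancel (h1.symm.trans h3))
end
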